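/- (Gradient-tracking error recursion.) Assume each f_i is L-smooth and the family is δ-similar; let W be a gossip matrix with spectral gap parameter ρ ∈ [0,1). Let (x_i^{(r)})_{1≤i≤n, r≥0} be arbitrary points in ℝ^d and define h_i^{(r+1)} := ∑_{j=1}^n W_{ij}·(h_j^{(r)} + ∇f_j(x_j^{(r+1)})) − ∇f_i(x_i^{(r+1)}), starting from h_i^{(0)} with ∑_{i=1}^n h_i^{(0)} = 0. Then: (a) ∑_{i=1}^n h_i^{(r)} = 0 for all r ≥ 0; and (b) for all r ≥ 0, E^{(r+1)} ≤ 4ρ²·E^{(r)} + 4ρ²δ²·‖x̄^{(r+1)} − x̄^{(r)}‖² + 32L²·Ξ^{(r+1)}, where E^{(r)} := (1/n)·∑_{i=1}^n ‖h_i^{(r)} − ∇h_i(x̄^{(r)})‖², Ξ^{(r)} := (1/n)·∑_{i=1}^n ‖x_i^{(r)} − x̄^{(r)}‖², and x̄^{(r)} := (1/n)·∑_{i=1}^n x_i^{(r)}. -/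

import Mathlib

open scoped BigOperators
open scoped RealInnerProductSpace

abbrev Vec (d : ℕ) := EuclideanSpace ℝ (Fin d)

-- aux: three-term square bound
private lemma sq_add3 (a b c : ℝ) (ha : 0 ≤ a) (hb : 0 ≤ b) (hc : 0 ≤ c) :
    (a + b + c)^2 ≤ 3*a^2 + 3*b^2 + 3*c^2 := by nlinarith [sq_nonneg (a-b), sq_nonneg (a-c), sq_nonneg (b-c)]

private lemma norm_add3_sq_le {E : Type*} [NormedAddCommGroup E]
    (u v w : E) : ‖u + v + w‖^2 ≤ 3*‖u‖^2 + 3*‖v‖^2 + 3*‖w‖^2 := by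
  have h : ‖u + v + w‖ ≤ ‖u‖ + ‖v‖ + ‖w‖ := norm_add₃_le
  nlinarith [norm_nonneg (u+v+w), norm_nonneg u, norm_nonneg v, norm_nonneg w,
    sq_nonneg (‖u‖-‖v‖), sq_nonneg (‖u‖-‖w‖), sq_nonneg (‖v‖-‖w‖)]

private lemma norm_split_442 {E : Type*} [NormedAddCommGroup E]
    (u v w : E) : ‖u + v + w‖^2 ≤ 4*‖u‖^2 + 4*‖v‖^2 + 2*‖w‖^2 := by
  have h1 : ‖u + v + w‖ ≤ ‖u + v‖ + ‖w‖ := norm_add_le _ _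
  have h2 : ‖u + v‖ ≤ ‖u‖ + ‖v‖ := norm_add_le _ _
  nlinarith [norm_nonneg (u+v+w), norm_nonneg (u+v), norm_nonneg u, norm_nonneg v, norm_nonneg w,
    sq_nonneg (‖u‖-‖v‖), sq_nonneg (‖u+v‖ - ‖w‖)]

set_option maxHeartbeats 1600000 in
/-- Gradient-tracking error recursion: the tracking variables preserve zero sum,
and the tracking error satisfies
`E^{(r+1)} ≤ 4ρ²·E^{(r)} + 4ρ²δ²·‖x̄^{(r+1)} − x̄^{(r)}‖² + 32L²·Ξ^{(r+1)}`. -/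
theorem stmt_3 (d n : ℕ) (hn : 1 ≤ n)
    (f : Fin n → Vec d → ℝ) (g : Fin n → Vec d → Vec d)
    (hdiff : ∀ i x, HasGradientAt (f i) (g i x) x)
    (L δ ρ : ℝ) (hL : 0 < L) (hδ : 0 < δ) (hρ0 : 0 ≤ ρ) (hρ1 : ρ < 1)
    (hsmooth : ∀ i (x y : Vec d), ‖g i x - g i y‖ ≤ L * ‖x - y‖)
    (hsim : ∀ x y : Vec d,
      (1 / (n : ℝ)) * ∑ i, ‖(((1 / (n : ℝ)) • ∑ j, g j x) - g i x)
          - (((1 / (n : ℝ)) • ∑ j, g j y) - g i y)‖ ^ 2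
        ≤ δ ^ 2 * ‖x - y‖ ^ 2)
    (W : Matrix (Fin n) (Fin n) ℝ)
    (hWsymm : ∀ i j, W i j = W j i)
    (hWcol : ∀ j, ∑ i, W i j = 1)
    (hWgap : ∀ z : Fin n → Vec d,
      ∑ i, ‖(∑ j, W i j • z j) - (1 / (n : ℝ)) • ∑ k, z k‖ ^ 2
        ≤ ρ ^ 2 * ∑ i, ‖z i - (1 / (n : ℝ)) • ∑ k, z k‖ ^ 2)
    (x h : ℕ → Fin n → Vec d)
    (hrec : ∀ r i, h (r + 1) i
      = (∑ j, W i j • (h r j + g j (x (r + 1) j))) - g i (x (r + 1) i))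
    (h0 : ∑ i, h 0 i = 0)
    (xbar : ℕ → Vec d) (hxbar : ∀ r, xbar r = (1 / (n : ℝ)) • ∑ i, x r i)
    (Err Xi : ℕ → ℝ)
    (hErr : ∀ r, Err r = (1 / (n : ℝ)) * ∑ i,
      ‖h r i - (((1 / (n : ℝ)) • ∑ j, g j (xbar r)) - g i (xbar r))‖ ^ 2)
    (hXi : ∀ r, Xi r = (1 / (n : ℝ)) * ∑ i, ‖x r i - xbar r‖ ^ 2) :
    (∀ r, ∑ i, h r i = 0) ∧
    (∀ r, Err (r + 1)
      ≤ 4 * ρ ^ 2 * Err r + 4 * ρ ^ 2 * δ ^ 2 * ‖xbar (r + 1) - xbar r‖ ^ 2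
        + 32 * L ^ 2 * Xi (r + 1)) := by
  have hn0 : (0:ℝ) < (n:ℝ) := by exact_mod_cast Nat.lt_of_lt_of_le Nat.zero_lt_one hn
  have hnne : (n:ℝ) ≠ 0 := ne_of_gt hn0
  have hWrow : ∀ i, ∑ j, W i j = 1 := by
    intro i
    rw [Finset.sum_congr rfl (fun j _ => hWsymm i j)]
    exact hWcol i
  -- Part (a)
  have ha : ∀ r, ∑ i, h r i = 0 := by
    intro r
    induction r with
    | zero => exact h0
    | succ r ih =>
      have e1 : ∑ i, h (r+1) i
          = (∑ j, (∑ i, W i j) • (h r j + g j (x (r + 1) j))) - ∑ i, g i (x (r + 1) i) := by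
        simp only [hrec]
        rw [Finset.sum_sub_distrib]
        congr 1
        rw [Finset.sum_comm]
        exact Finset.sum_congr rfl (fun j _ => (Finset.sum_smul).symm)
      rw [e1]
      simp only [hWcol, one_smul, Finset.sum_add_distrib, ih]
      abel
  refine ⟨ha, ?_⟩
  intro r
  -- notation
  set xb : Vec d := xbar r with hxb
  set xb' : Vec d := xbar (r+1) with hxb'
  set G : Vec d → Fin n → Vec d := fun y i => ((1 / (n : ℝ)) • ∑ j, g j y) - g i y with hG
  set p : Fin n → Vec d := fun i => h r i - G xb i with hp
  set q : Fin n → Vec d := fun i => G xb i - G xb' i with hq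
  set c : Fin n → Vec d := fun i => g i (x (r+1) i) - g i xb' with hc
  set cb : Vec d := (1 / (n : ℝ)) • ∑ j, c j with hcb
  set c' : Fin n → Vec d := fun i => c i - cb with hc'
  -- sums vanish
  have sumG : ∀ y, ∑ i, G y i = 0 := by
    intro y
    simp only [hG]
    rw [Finset.sum_sub_distrib, Finset.sum_const, Finset.card_fin]
    rw [← Nat.cast_smul_eq_nsmul ℝ n, smul_smul]
    rw [mul_one_div, div_self hnne, one_smul, sub_self]
  have sump : ∑ i, p i = 0 := by
    simp only [hp]
    rw [Finset.sum_sub_distrib, ha r, sumG, sub_self]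
  have sumq : ∑ i, q i = 0 := by
    simp only [hq]
    rw [Finset.sum_sub_distrib, sumG, sumG, sub_self]
  have sumc' : ∑ i, c' i = 0 := by
    simp only [hc']
    rw [Finset.sum_sub_distrib, Finset.sum_const, Finset.card_fin, hcb]
    rw [← Nat.cast_smul_eq_nsmul ℝ n, smul_smul]
    rw [mul_one_div, div_self hnne, one_smul, sub_self]
  -- key identity
  have key : ∀ i, h (r+1) i - G xb' i
      = (∑ j, W i j • p j) + (∑ j, W i j • q j)
        + ((∑ j, W i j • c' j) + cb - c i) := by
    intro i
    have e1 : ∀ j, W i j • p j + W i j • q j + W i j • c' j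
        = W i j • (h r j + g j (x (r + 1) j))
          - W i j • (((1 / (n : ℝ)) • ∑ k, g k xb') + cb) := by
      intro j
      rw [← smul_add, ← smul_add, ← smul_sub]
      congr 1
      simp only [hp, hq, hc', hc, hG]
      abel
    have e2 : (∑ j, W i j • p j) + (∑ j, W i j • q j) + (∑ j, W i j • c' j)
        = (∑ j, W i j • (h r j + g j (x (r + 1) j)))
          - (∑ j, W i j) • (((1 / (n : ℝ)) • ∑ k, g k xb') + cb) := by
      rw [← Finset.sum_add_distrib, ← Finset.sum_add_distrib]
      rw [Finset.sum_congr rfl (fun j _ => e1 j)]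
      rw [Finset.sum_sub_distrib, Finset.sum_smul]
    rw [hWrow, one_smul] at e2
    have e3 : (∑ j, W i j • p j) + (∑ j, W i j • q j)
        + ((∑ j, W i j • c' j) + cb - c i)
        = ((∑ j, W i j • (h r j + g j (x (r + 1) j)))
            - (((1 / (n : ℝ)) • ∑ k, g k xb') + cb)) + cb - c i := by
      rw [← e2]; abel
    rw [hrec, e3]
    simp only [hG, hc]
    abel
  -- gossip bounds
  have gapA : ∑ i, ‖∑ j, W i j • p j‖^2 ≤ ρ^2 * ∑ i, ‖p i‖^2 := by
    have h1 := hWgap p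
    rw [sump, smul_zero] at h1
    simpa using h1
  have gapB : ∑ i, ‖∑ j, W i j • q j‖^2 ≤ ρ^2 * ∑ i, ‖q i‖^2 := by
    have h1 := hWgap q
    rw [sumq, smul_zero] at h1
    simpa using h1
  have gapC : ∑ i, ‖∑ j, W i j • c' j‖^2 ≤ ρ^2 * ∑ i, ‖c' i‖^2 := by
    have h1 := hWgap c'
    rw [sumc', smul_zero] at h1
    simpa using h1
  -- variance identity and consequences
  have sumceq : ∑ i, c i = (n:ℝ) • cb := by
    rw [hcb, smul_smul, mul_one_div, div_self hnne, one_smul]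
  have varc : ∑ i, ‖c' i‖^2 = ∑ i, ‖c i‖^2 - (n:ℝ) * ‖cb‖^2 := by
    have hnorm : ∀ i : Fin n, ‖c' i‖^2 = ‖c i‖^2 - 2*⟪c i, cb⟫ + ‖cb‖^2 :=
      fun i => norm_sub_sq_real _ _
    rw [Finset.sum_congr rfl (fun i _ => hnorm i), Finset.sum_add_distrib,
      Finset.sum_sub_distrib, ← Finset.mul_sum, ← sum_inner, sumceq, real_inner_smul_left,
      real_inner_self_eq_norm_sq, Finset.sum_const, Finset.card_fin, nsmul_eq_mul]
    ring
  have sc_nonneg : (0:ℝ) ≤ ∑ i, ‖c i‖^2 := Finset.sum_nonneg fun i _ => sq_nonneg _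
  have sc'_nonneg : (0:ℝ) ≤ ∑ i, ‖c' i‖^2 := Finset.sum_nonneg fun i _ => sq_nonneg _
  have cbb : (n:ℝ) * ‖cb‖^2 ≤ ∑ i, ‖c i‖^2 := by linarith
  have c'le : ∑ i, ‖c' i‖^2 ≤ ∑ i, ‖c i‖^2 := by
    have : (0:ℝ) ≤ (n:ℝ) * ‖cb‖^2 := by positivity
    linarith
  -- smoothness bound
  have hcSum : ∑ i, ‖c i‖^2 ≤ L^2 * ((n:ℝ) * Xi (r+1)) := by
    have h1 : ∑ i, ‖c i‖^2 ≤ ∑ i, L^2 * ‖x (r+1) i - xb'‖^2 := by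
      apply Finset.sum_le_sum
      intro i _
      have h2 := hsmooth i (x (r+1) i) xb'
      have h3 : ‖c i‖^2 ≤ (L * ‖x (r+1) i - xb'‖)^2 := by
        simp only [hc]
        exact pow_le_pow_left₀ (norm_nonneg _) h2 2
      rw [mul_pow] at h3
      exact h3
    rw [← Finset.mul_sum] at h1
    have hXiv : ∑ i, ‖x (r+1) i - xb'‖^2 = (n:ℝ) * Xi (r+1) := by
      rw [hXi (r+1)]
      field_simp
      rfl
    rw [hXiv] at h1
    exact h1
  -- Err relations
  have hpE : ∑ i, ‖p i‖^2 = (n:ℝ) * Err r := by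
    have e : ∑ i, ‖p i‖^2
        = ∑ i, ‖h r i - (((1 / (n : ℝ)) • ∑ j, g j xb) - g i xb)‖^2 := by
      simp only [hp, hG]
    rw [e, hErr r]
    field_simp
    rfl
  have hE' : (n:ℝ) * Err (r+1) = ∑ i, ‖h (r+1) i - G xb' i‖^2 := by
    have e : ∑ i, ‖h (r+1) i - G xb' i‖^2
        = ∑ i, ‖h (r+1) i - (((1 / (n : ℝ)) • ∑ j, g j xb') - g i xb')‖^2 := by
      simp only [hG]
    rw [e, hErr (r+1)]
    field_simp
    rfl
  -- similarity bound
  have hqB : ∑ i, ‖q i‖^2 ≤ (n:ℝ) * (δ^2 * ‖xb' - xb‖^2) := by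
    have h1 := hsim xb xb'
    rw [norm_sub_rev] at h1
    have e : ∑ i, ‖q i‖^2
        = ∑ i, ‖(((1 / (n : ℝ)) • ∑ j, g j xb) - g i xb)
            - (((1 / (n : ℝ)) • ∑ j, g j xb') - g i xb')‖^2 := by
      simp only [hq, hG]
    have h2 : ∑ i, ‖q i‖^2 = (n:ℝ) * ((1 / (n : ℝ)) * ∑ i, ‖(((1 / (n : ℝ)) • ∑ j, g j xb) - g i xb)
            - (((1 / (n : ℝ)) • ∑ j, g j xb') - g i xb')‖^2) := by
      rw [← e]; field_simp
    rw [h2]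
    exact mul_le_mul_of_nonneg_left h1 (le_of_lt hn0)
  -- pointwise split and summation
  have step1 : ∑ i, ‖h (r+1) i - G xb' i‖^2
      ≤ 4 * ∑ i, ‖∑ j, W i j • p j‖^2 + 4 * ∑ i, ‖∑ j, W i j • q j‖^2
        + 2 * ∑ i, ‖(∑ j, W i j • c' j) + cb - c i‖^2 := by
    have hpt : ∀ i, ‖h (r+1) i - G xb' i‖^2
        ≤ 4*‖∑ j, W i j • p j‖^2 + 4*‖∑ j, W i j • q j‖^2
          + 2*‖(∑ j, W i j • c' j) + cb - c i‖^2 := by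
      intro i
      rw [key i]
      have := norm_split_442 (∑ j, W i j • p j) (∑ j, W i j • q j)
        ((∑ j, W i j • c' j) + cb - c i)
      exact this
    calc ∑ i, ‖h (r+1) i - G xb' i‖^2
        ≤ ∑ i, (4*‖∑ j, W i j • p j‖^2 + 4*‖∑ j, W i j • q j‖^2
          + 2*‖(∑ j, W i j • c' j) + cb - c i‖^2) := Finset.sum_le_sum fun i _ => hpt i
      _ = _ := by
          rw [Finset.sum_add_distrib, Finset.sum_add_distrib,
            ← Finset.mul_sum, ← Finset.mul_sum, ← Finset.mul_sum]
  have step2 : ∑ i, ‖(∑ j, W i j • c' j) + cb - c i‖^2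
      ≤ 3 * ∑ i, ‖∑ j, W i j • c' j‖^2 + 3 * ((n:ℝ) * ‖cb‖^2) + 3 * ∑ i, ‖c i‖^2 := by
    have hpt : ∀ i, ‖(∑ j, W i j • c' j) + cb - c i‖^2
        ≤ 3*‖∑ j, W i j • c' j‖^2 + 3*‖cb‖^2 + 3*‖c i‖^2 := by
      intro i
      have h1 := norm_add3_sq_le (∑ j, W i j • c' j) cb (-(c i))
      simp only [norm_neg] at h1
      calc ‖(∑ j, W i j • c' j) + cb - c i‖^2
          = ‖(∑ j, W i j • c' j) + cb + -(c i)‖^2 := by rw [← sub_eq_add_neg]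
        _ ≤ _ := h1
    calc ∑ i, ‖(∑ j, W i j • c' j) + cb - c i‖^2
        ≤ ∑ i, (3*‖∑ j, W i j • c' j‖^2 + 3*‖cb‖^2 + 3*‖c i‖^2) :=
          Finset.sum_le_sum fun i _ => hpt i
      _ = _ := by
          simp only [Finset.sum_add_distrib, ← Finset.mul_sum, Finset.sum_const,
            Finset.card_fin, nsmul_eq_mul]
  -- put everything together
  have hρ2 : ρ^2 ≤ 1 := by
    rw [sq]
    exact mul_le_one₀ (le_of_lt hρ1) hρ0 (le_of_lt hρ1)
  have hρ2n : (0:ℝ) ≤ ρ^2 := sq_nonneg ρ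
  have sq_nonneg' : (0:ℝ) ≤ ∑ i, ‖q i‖^2 := Finset.sum_nonneg fun i _ => sq_nonneg _
  have final : (n:ℝ) * Err (r+1) ≤ (n:ℝ) * (4 * ρ ^ 2 * Err r
      + 4 * ρ ^ 2 * δ ^ 2 * ‖xb' - xb‖ ^ 2 + 32 * L ^ 2 * Xi (r+1)) := by
    rw [hE']
    have hXinn : (0:ℝ) ≤ L^2 * ((n:ℝ) * Xi (r+1)) := le_trans sc_nonneg hcSum
    have t1 : ∑ i, ‖∑ j, W i j • p j‖^2 ≤ ρ^2 * ((n:ℝ) * Err r) := by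
      rw [← hpE]; exact gapA
    have t2 : ρ^2 * ∑ i, ‖q i‖^2 ≤ ρ^2 * ((n:ℝ) * (δ^2 * ‖xb' - xb‖^2)) :=
      mul_le_mul_of_nonneg_left hqB hρ2n
    have t2' : ∑ i, ‖∑ j, W i j • q j‖^2 ≤ ρ^2 * ((n:ℝ) * (δ^2 * ‖xb' - xb‖^2)) :=
      le_trans gapB t2
    have t3 : ∑ i, ‖∑ j, W i j • c' j‖^2 ≤ ∑ i, ‖c i‖^2 :=
      le_trans gapC (le_trans (mul_le_of_le_one_left sc'_nonneg hρ2) c'le)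
    have expand : (n:ℝ) * (4 * ρ ^ 2 * Err r
        + 4 * ρ ^ 2 * δ ^ 2 * ‖xb' - xb‖ ^ 2 + 32 * L ^ 2 * Xi (r+1))
        = 4 * (ρ^2 * ((n:ℝ) * Err r)) + 4 * (ρ^2 * ((n:ℝ) * (δ^2 * ‖xb' - xb‖^2)))
          + 32 * (L^2 * ((n:ℝ) * Xi (r+1))) := by ring
    rw [expand]
    linarith [step1, step2, t1, t2', t3, hcSum, cbb, hXinn]
  have := (mul_le_mul_iff_right₀ hn0).mp final
  linarith
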